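/- Let $w_1,\dots,w_{n-1}$ be the zeros of $A_n^\gamma$ in descending order of modulus, and $v_1,\dots,v_{n-1}$ the zeros of $B_n^\gamma$ in descending order (these are real and nonnegative). Then $\prod_{j=1}^k|w_j|\le \prod_{j=1}^k v_j$ for $1\le k\le n-1$. -/

import Mathlib

open Polynomial Finset

namespace MajAux

open Matrix
open scoped ComplexOrder

noncomputable section

theorem charpoly_eval {m : Type*} [Fintype m] [DecidableEq m] {R : Type*} [CommRing R]
    (M : Matrix m m R) (x : R) :
    M.charpoly.eval x = Matrix.det (x • (1 : Matrix m m R) - M) := by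
  rw [Matrix.charpoly, ← Polynomial.coe_evalRingHom, RingHom.map_det]
  congr 1
  ext i j
  rcases eq_or_ne i j with rfl | hij
  · simp [Matrix.charmatrix_apply_eq, Matrix.one_apply]
  · simp [Matrix.charmatrix_apply_ne _ _ _ hij, Matrix.one_apply, hij]

theorem charpoly_diagonal {m : Type*} [Fintype m] [DecidableEq m] (c : m → ℂ) :
    (Matrix.diagonal c).charpoly = ∏ i, (X - C (c i)) := by
  rw [Matrix.charpoly]
  have : charmatrix (Matrix.diagonal c) = Matrix.diagonal (fun i => (X : ℂ[X]) - C (c i)) := by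
    ext i j
    rcases eq_or_ne i j with rfl | hij
    · simp [Matrix.charmatrix_apply_eq]
    · simp [Matrix.charmatrix_apply_ne _ _ _ hij, Matrix.diagonal_apply_ne _ hij, hij]
  rw [this, Matrix.det_diagonal]

theorem det_succ_col_zero_block {R : Type*} [CommRing R] {s : ℕ}
    (M : Matrix (Fin (s+1)) (Fin (s+1)) R)
    (h0 : ∀ i : Fin s, M i.succ 0 = 0) :
    Matrix.det M = M 0 0 * Matrix.det (M.submatrix Fin.succ Fin.succ) := by
  rw [Matrix.det_succ_column_zero]
  rw [Finset.sum_eq_single 0]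
  · simp [Fin.succAbove_zero]
  · intro i _ hi
    obtain ⟨i', rfl⟩ := Fin.exists_succ_eq.mpr hi
    simp [h0]
  · simp


theorem charpoly_unitary_conj {m : Type*} [Fintype m] [DecidableEq m]
    (U A : Matrix m m ℂ) (hU : Uᴴ * U = 1) : (Uᴴ * A * U).charpoly = A.charpoly := by
  have h1 : (Uᴴ.map (⇑(C : ℂ →+* ℂ[X]))) * (U.map ⇑C) = 1 := by
    rw [← Matrix.map_mul, hU, Matrix.map_one _ (map_zero C) (map_one C)]
  have key : charmatrix (Uᴴ * A * U) = (Uᴴ.map ⇑C) * charmatrix A * (U.map ⇑C) := by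
    rw [charmatrix, charmatrix, Matrix.mul_sub, Matrix.sub_mul]
    congr 1
    · rw [← (Matrix.scalar_commute (X : ℂ[X]) (Commute.all X) (Uᴴ.map ⇑C)).eq, mul_assoc, h1,
        mul_one]
    · simp only [RingHom.mapMatrix_apply, Matrix.map_mul]
  rw [Matrix.charpoly, key, Matrix.charpoly]
  calc (Uᴴ.map ⇑C * A.charmatrix * U.map ⇑C).det
      = A.charmatrix.det * ((Uᴴ.map ⇑C) * (U.map ⇑C)).det := by
        rw [Matrix.det_mul, Matrix.det_mul, Matrix.det_mul]; ring
    _ = A.charmatrix.det := by rw [h1, Matrix.det_one, mul_one]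

theorem prod_erase_fin {n : ℕ} (z : ℕ → ℂ) (kk : Fin n) :
    ∏ j ∈ Finset.univ.erase kk, (X - C (z (j : ℕ)))
      = ∏ j ∈ (Finset.range n).erase (kk : ℕ), (X - C (z j)) := by
  have h1 : (X - C (z kk)) * ∏ j ∈ Finset.univ.erase kk, (X - C (z (j:ℕ)))
      = ∏ j : Fin n, (X - C (z (j:ℕ))) :=
    Finset.mul_prod_erase Finset.univ (fun j : Fin n => (X - C (z (j:ℕ)))) (mem_univ kk)
  have h2 : (X - C (z kk)) * ∏ j ∈ (range n).erase (kk:ℕ), (X - C (z j))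
      = ∏ j ∈ range n, (X - C (z j)) :=
    Finset.mul_prod_erase (range n) (fun j : ℕ => (X - C (z j))) (by simp [kk.isLt])
  have h3 : ∏ j : Fin n, (X - C (z (j:ℕ))) = ∏ j ∈ range n, (X - C (z j)) :=
    Fin.prod_univ_eq_prod_range (fun j => (X - C (z j))) n
  have hX : (X - C (z kk) : ℂ[X]) ≠ 0 := X_sub_C_ne_zero _
  exact mul_left_cancel₀ hX (by rw [h1, h3, ← h2])

theorem exists_perm_comp {N : ℕ} (f g : Fin N → ℝ)
    (h : Multiset.map f Finset.univ.val = Multiset.map g Finset.univ.val) :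
    ∃ σ : Equiv.Perm (Fin N), f = g ∘ σ := by
  have hcard : ∀ r : ℝ, Fintype.card {a // f a = r} = Fintype.card {b // g b = r} := by
    intro r
    have hc := congrArg (Multiset.count r) h
    rw [Multiset.count_map, Multiset.count_map] at hc
    rw [Fintype.card_subtype, Fintype.card_subtype, Finset.card_def, Finset.card_def,
      Finset.filter_val, Finset.filter_val]
    have hpq : ∀ (φ : Fin N → ℝ), Multiset.filter (fun a => φ a = r) Finset.univ.val
        = Multiset.filter (fun a => r = φ a) Finset.univ.val :=
      fun φ => Multiset.filter_congr (fun a _ => ⟨Eq.symm, Eq.symm⟩)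
    rw [hpq f, hpq g, hc]
  let e : ∀ r : ℝ, {a // f a = r} ≃ {b // g b = r} := fun r => Fintype.equivOfCardEq (hcard r)
  refine ⟨Equiv.ofFiberEquiv e, funext fun a => ?_⟩
  exact (Equiv.ofFiberEquiv_map e a).symm

theorem prod_le_prod_of_inj {N k : ℕ} (hk : k ≤ N) (β : Fin N → ℝ)
    (hdesc : ∀ i j : Fin N, i ≤ j → β j ≤ β i) (hnn : ∀ i, 0 ≤ β i)
    (g : Fin k → Fin N) (hg : Function.Injective g) :
    ∏ i : Fin k, β (g i) ≤ ∏ i : Fin k, β (Fin.castLE hk i) := by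
  set S : Finset (Fin N) := Finset.image g Finset.univ with hS
  have hcard : S.card = k := by
    rw [hS, Finset.card_image_of_injective _ hg, Finset.card_univ, Fintype.card_fin]
  set e := S.orderEmbOfFin hcard with he
  have himg : Finset.image (⇑e) Finset.univ = S := by
    ext a
    simp only [Finset.mem_image, Finset.mem_univ, true_and]
    constructor
    · rintro ⟨i, rfl⟩; exact Finset.orderEmbOfFin_mem _ _ _
    · intro ha
      have : a ∈ Set.range ⇑e := by rw [Finset.range_orderEmbOfFin]; exact ha
      obtain ⟨i, hi⟩ := this; exact ⟨i, hi⟩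
  have h1 : ∏ i : Fin k, β (g i) = ∏ i : Fin k, β (e i) := by
    rw [← Finset.prod_image (f := β) (fun x _ y _ hxy => hg hxy), ← hS]
    rw [← himg, Finset.prod_image (fun x _ y _ hxy => e.injective hxy)]
  rw [h1]
  have key : ∀ m : ℕ, ∀ hm : m < k, (m : ℕ) ≤ (e ⟨m, hm⟩ : ℕ) := by
    intro m
    induction m with
    | zero => intro hm; exact Nat.zero_le _
    | succ t ih =>
      intro hm
      have ht : t < k := Nat.lt_of_succ_lt hm
      have h2 : e ⟨t, ht⟩ < e ⟨t + 1, hm⟩ := e.strictMono (by simp [Fin.lt_def])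
      have h3 := ih ht
      have h4 : (e ⟨t, ht⟩ : ℕ) < (e ⟨t+1, hm⟩ : ℕ) := h2
      omega
  refine Finset.prod_le_prod (fun i _ => hnn _) (fun i _ => hdesc _ _ ?_)
  rw [Fin.le_def]
  exact key i.1 i.2

theorem charpoly_proj_diag_proj {n : ℕ} (u : Fin n → ℂ) (hu : ∑ j, u j * u j = 1)
    (d : Fin n → ℂ) :
    ((1 - Matrix.vecMulVec u u) * Matrix.diagonal d * (1 - Matrix.vecMulVec u u)).charpoly
      = X * ∑ k : Fin n, C (u k * u k) * ∏ j ∈ Finset.univ.erase k, (X - C (d j)) := by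
  apply Polynomial.eq_of_infinite_eval_eq
  have hinf : ((Set.range d)ᶜ : Set ℂ).Infinite := (Set.finite_range d).infinite_compl
  apply Set.Infinite.mono ?_ hinf
  intro x hx
  simp only [Set.mem_compl_iff, Set.mem_range, not_exists] at hx
  have hxd : ∀ j, x - d j ≠ 0 := fun j h => hx j (sub_eq_zero.mp h).symm
  simp only [Set.mem_setOf_eq]
  rw [charpoly_eval]
  set s : ℂ := ∑ j, u j * d j * u j with hs0
  have aux1 : ∀ (a b c : Fin n → ℂ),
      Matrix.vecMulVec a b * Matrix.diagonal c = Matrix.vecMulVec a (fun j => b j * c j) := by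
    intro a b c; ext i j
    simp [Matrix.vecMulVec_apply, Matrix.mul_diagonal, mul_assoc]
  have aux2 : ∀ (a b c : Fin n → ℂ),
      Matrix.diagonal c * Matrix.vecMulVec a b = Matrix.vecMulVec (fun i => c i * a i) b := by
    intro a b c; ext i j
    simp [Matrix.vecMulVec_apply, Matrix.diagonal_mul, mul_assoc]
  have aux3 : ∀ (a b c e : Fin n → ℂ), Matrix.vecMulVec a b * Matrix.vecMulVec c e
      = (∑ j, b j * c j) • Matrix.vecMulVec a e := by
    intro a b c e; ext i j
    rw [Matrix.mul_apply, Matrix.smul_apply, Matrix.vecMulVec_apply, smul_eq_mul,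
      Finset.sum_mul]
    refine Finset.sum_congr rfl fun t _ => ?_
    simp only [Matrix.vecMulVec_apply]; ring
  have hs : (1 - Matrix.vecMulVec u u) * Matrix.diagonal d * (1 - Matrix.vecMulVec u u)
      = Matrix.diagonal d - Matrix.vecMulVec (fun i => d i * u i) u
          - Matrix.vecMulVec u (fun j => u j * d j)
          + s • Matrix.vecMulVec u u := by
    simp only [Matrix.sub_mul, Matrix.mul_sub, Matrix.one_mul, Matrix.mul_one]
    rw [aux1 u u d, aux2 u u d, aux3 u (fun j => u j * d j) u u, ← hs0]
    abel
  set F : Matrix (Fin n) (Fin 2) ℂ :=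
    Matrix.of (fun j t => if t = 0 then u j else d j * u j - s * u j) with hF
  set G : Matrix (Fin 2) (Fin n) ℂ :=
    Matrix.of (fun t j => if t = 0 then u j * d j else u j) with hG
  have hFG : F * G = Matrix.vecMulVec u (fun j => u j * d j)
      + Matrix.vecMulVec (fun i => d i * u i - s * u i) u := by
    ext i j
    rw [Matrix.mul_apply, Fin.sum_univ_two]
    simp [hF, hG, Matrix.vecMulVec_apply]
  have aux4 : Matrix.vecMulVec (fun i => d i * u i - s * u i) u
      = Matrix.vecMulVec (fun i => d i * u i) u - s • Matrix.vecMulVec u u := by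
    ext i j; simp [Matrix.vecMulVec_apply]; ring
  have key : x • (1 : Matrix (Fin n) (Fin n) ℂ)
        - (1 - Matrix.vecMulVec u u) * Matrix.diagonal d * (1 - Matrix.vecMulVec u u)
      = Matrix.diagonal (fun j => x - d j) + F * G := by
    have h1 : x • (1 : Matrix (Fin n) (Fin n) ℂ) - Matrix.diagonal d
        = Matrix.diagonal (fun j => x - d j) := by
      ext i j
      rcases eq_or_ne i j with rfl | hij
      · simp [Matrix.one_apply]
      · simp [Matrix.one_apply_ne hij, Matrix.diagonal_apply_ne _ hij, hij]
    rw [hs, hFG, aux4, ← h1]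
    abel
  rw [key]
  set R0 : Matrix (Fin n) (Fin n) ℂ := Matrix.diagonal (fun j => (x - d j)⁻¹) with hR0
  have hR : Matrix.diagonal (fun j => x - d j) * R0 = 1 := by
    rw [hR0, Matrix.diagonal_mul_diagonal]
    have : (fun j => (x - d j) * (x - d j)⁻¹) = fun _ : Fin n => (1 : ℂ) :=
      funext fun j => mul_inv_cancel₀ (hxd j)
    rw [this, Matrix.diagonal_one]
  have split : Matrix.diagonal (fun j => x - d j) + F * G
      = Matrix.diagonal (fun j => x - d j) * (1 + R0 * F * G) := by
    rw [Matrix.mul_add, Matrix.mul_one, ← Matrix.mul_assoc, ← Matrix.mul_assoc, hR,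
      Matrix.one_mul]
  rw [split, Matrix.det_mul, Matrix.det_diagonal]
  have comm2 : Matrix.det (1 + R0 * F * G) = Matrix.det (1 + G * (R0 * F)) :=
    Matrix.det_one_add_mul_comm (R0 * F) G
  rw [comm2]
  set g : ℂ := ∑ j, (u j * u j) * (x - d j)⁻¹ with hg0
  set hh : ℂ := ∑ j, (u j * u j) * d j * (x - d j)⁻¹ with hh0
  set q : ℂ := ∑ j, (u j * u j) * d j * d j * (x - d j)⁻¹ with hq0
  have entry : ∀ t t', (G * (R0 * F)) t t' = ∑ j, G t j * ((x - d j)⁻¹ * F j t') := by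
    intro t t'
    rw [Matrix.mul_apply]
    refine Finset.sum_congr rfl fun j _ => ?_
    rw [hR0, Matrix.diagonal_mul]
  have hsum : ∑ j, (u j * u j) * d j = s := by
    rw [hs0]; exact Finset.sum_congr rfl fun j _ => by ring
  have c00 : (G * (R0 * F)) 0 0 = hh := by
    rw [entry, hh0]
    refine Finset.sum_congr rfl fun j _ => ?_
    simp only [hF, hG, Matrix.of_apply, eq_self_iff_true, if_true]
    ring
  have c01 : (G * (R0 * F)) 0 1 = q - s * hh := by
    rw [entry, hq0, hh0, Finset.mul_sum, ← Finset.sum_sub_distrib]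
    refine Finset.sum_congr rfl fun j _ => ?_
    simp only [hF, hG, Matrix.of_apply, eq_self_iff_true, if_true, if_neg (by decide : ¬(1 : Fin 2) = 0)]
    ring
  have c10 : (G * (R0 * F)) 1 0 = g := by
    rw [entry, hg0]
    refine Finset.sum_congr rfl fun j _ => ?_
    simp only [hF, hG, Matrix.of_apply, eq_self_iff_true, if_true, if_neg (by decide : ¬(1 : Fin 2) = 0)]
    ring
  have c11 : (G * (R0 * F)) 1 1 = hh - s * g := by
    rw [entry, hh0, hg0, Finset.mul_sum, ← Finset.sum_sub_distrib]
    refine Finset.sum_congr rfl fun j _ => ?_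
    simp only [hF, hG, Matrix.of_apply, if_neg (by decide : ¬(1 : Fin 2) = 0)]
    ring
  have hgx : hh = x * g - 1 := by
    have e : ∀ j : Fin n, (u j * u j) * d j * (x - d j)⁻¹
        = x * ((u j * u j) * (x - d j)⁻¹) - u j * u j := by
      intro j
      field_simp [hxd j]
      ring
    rw [hh0, Finset.sum_congr rfl (fun j _ => e j), Finset.sum_sub_distrib, ← Finset.mul_sum,
      ← hg0, hu]
  have hqx : q = x * hh - s := by
    have e : ∀ j : Fin n, (u j * u j) * d j * d j * (x - d j)⁻¹
        = x * ((u j * u j) * d j * (x - d j)⁻¹) - (u j * u j) * d j := by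
      intro j
      field_simp [hxd j]
      ring
    rw [hq0, Finset.sum_congr rfl (fun j _ => e j), Finset.sum_sub_distrib, ← Finset.mul_sum,
      ← hh0, hsum]
  have det2 : Matrix.det (1 + G * (R0 * F)) = x * g := by
    rw [Matrix.det_fin_two]
    simp only [Matrix.add_apply, Matrix.one_apply_eq,
      Matrix.one_apply_ne (by decide : ¬(0 : Fin 2) = 1),
      Matrix.one_apply_ne (by decide : ¬(1 : Fin 2) = 0), c00, c01, c10, c11]
    rw [hqx, hgx]
    ring
  rw [det2]
  rw [eval_mul, eval_X, Polynomial.eval_finset_sum]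
  have final : ∀ k ∈ (Finset.univ : Finset (Fin n)),
      eval x (C (u k * u k) * ∏ j ∈ Finset.univ.erase k, (X - C (d j)))
      = (u k * u k) * ∏ j ∈ Finset.univ.erase k, (x - d j) := by
    intro k _
    rw [eval_mul, eval_C, Polynomial.eval_prod]
    congr 1
    exact Finset.prod_congr rfl fun j _ => by rw [eval_sub, eval_X, eval_C]
  rw [Finset.sum_congr rfl final]
  calc (∏ j, (x - d j)) * (x * g) = x * ((∏ j, (x - d j)) * g) := by ring
    _ = x * ∑ k, (∏ j, (x - d j)) * ((u k * u k) * (x - d k)⁻¹) := by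
        rw [hg0, Finset.mul_sum]
    _ = x * ∑ k, (u k * u k) * ∏ j ∈ Finset.univ.erase k, (x - d j) := by
        congr 1
        refine Finset.sum_congr rfl fun k _ => ?_
        rw [← Finset.mul_prod_erase Finset.univ (fun j => (x - d j)) (Finset.mem_univ k)]
        field_simp [hxd k]

theorem exists_isometry_det : ∀ (k : ℕ) {n : ℕ} (hk : k ≤ n) (A : Matrix (Fin n) (Fin n) ℂ)
    (μ : Fin n → ℂ), A.charpoly = ∏ i, (X - C (μ i)) →
    ∃ V : Matrix (Fin n) (Fin k) ℂ, Vᴴ * V = 1 ∧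
      Matrix.det (Vᴴ * A * V) = ∏ i : Fin k, μ (Fin.castLE hk i) := by
  intro k
  induction k with
  | zero =>
    intro n hk A μ h
    refine ⟨Matrix.of (fun _ t => t.elim0), ?_, ?_⟩
    · ext i j; exact i.elim0
    · rw [Matrix.det_fin_zero, Fin.prod_univ_zero]
  | succ k ih =>
    intro n hk A μ h
    match n, hk with
    | 0, hk => exact absurd hk (by omega)
    | (m+1), hk =>
    -- eigenvector for μ 0
    have hev : Matrix.det (μ 0 • (1 : Matrix (Fin (m+1)) (Fin (m+1)) ℂ) - A) = 0 := by
      rw [← charpoly_eval, h, Polynomial.eval_prod]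
      refine Finset.prod_eq_zero (Finset.mem_univ (0 : Fin (m+1))) ?_
      simp
    obtain ⟨x0, hx0ne, hx0⟩ := (Matrix.exists_mulVec_eq_zero_iff).mpr hev
    have heig : A *ᵥ x0 = μ 0 • x0 := by
      have h1 : (μ 0 • (1 : Matrix (Fin (m+1)) (Fin (m+1)) ℂ)) *ᵥ x0 - A *ᵥ x0 = 0 := by
        rw [← Matrix.sub_mulVec, hx0]
      have h2 : (μ 0 • (1 : Matrix (Fin (m+1)) (Fin (m+1)) ℂ)) *ᵥ x0 = μ 0 • x0 := by
        rw [Matrix.smul_mulVec, Matrix.one_mulVec]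
      rw [← h2]
      exact (sub_eq_zero.mp h1).symm
    -- normalize
    set xE : EuclideanSpace ℂ (Fin (m+1)) := WithLp.toLp 2 x0 with hxE
    have hxEne : xE ≠ 0 := fun h => hx0ne (congrArg WithLp.ofLp h)
    have hcpos : (0:ℝ) < ‖xE‖ := norm_pos_iff.mpr hxEne
    set e0 : EuclideanSpace ℂ (Fin (m+1)) := ((‖xE‖⁻¹ : ℝ) : ℂ) • xE with he0
    have hnorm : ‖e0‖ = 1 := by
      rw [he0, norm_smul, Complex.norm_real, norm_inv, norm_norm, inv_mul_cancel₀ (ne_of_gt hcpos)]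
    have heig0 : A *ᵥ (e0 : Fin (m+1) → ℂ) = μ 0 • (e0 : Fin (m+1) → ℂ) := by
      show A *ᵥ (((‖xE‖⁻¹ : ℝ) : ℂ) • x0) = μ 0 • (((‖xE‖⁻¹ : ℝ) : ℂ) • x0)
      rw [Matrix.mulVec_smul, heig, smul_comm]
    -- orthonormal basis with first vector e0
    have hortho : Orthonormal ℂ (Set.restrict {(0 : Fin (m+1))} (fun _ => e0)) := by
      constructor
      · rintro ⟨i, hi⟩; exact hnorm
      · rintro ⟨i, hi⟩ ⟨j, hj⟩ hij
        exfalso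
        simp only [Set.mem_singleton_iff] at hi hj
        exact hij (Subtype.ext (hi.trans hj.symm))
    obtain ⟨b, hb⟩ := Orthonormal.exists_orthonormalBasis_extension_of_card_eq
      (𝕜 := ℂ) (by simp) hortho
    have hb0 : b 0 = e0 := hb 0 rfl
    set U : Matrix (Fin (m+1)) (Fin (m+1)) ℂ := Matrix.of (fun a i => (b i : Fin (m+1) → ℂ) a)
      with hUdef
    have hU : Uᴴ * U = 1 := by
      ext i j
      rw [Matrix.mul_apply, Matrix.one_apply]
      have horth := orthonormal_iff_ite.mp b.orthonormal i j
      rw [← horth, PiLp.inner_apply]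
      refine Finset.sum_congr rfl fun a _ => ?_
      rw [Matrix.conjTranspose_apply, hUdef]
      simp [RCLike.inner_apply, mul_comm]
    have hUU : U * Uᴴ = 1 := mul_eq_one_comm.mp hU
    -- first column of U is e0
    have hU0 : ∀ a, U a 0 = e0 a := by
      intro a; rw [hUdef]; simp [hb0]
    -- the conjugated matrix and its first column
    have hcolgen : ∀ (M : Matrix (Fin (m+1)) (Fin (m+1)) ℂ) (N : Matrix (Fin (m+1)) (Fin (m+1)) ℂ)
        (j : Fin (m+1)) (i : Fin (m+1)), (M * N) i j = (M *ᵥ (fun a => N a j)) i := by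
      intro M N j i
      rw [Matrix.mul_apply, Matrix.mulVec, dotProduct]
    have hA1col : ∀ i, (Uᴴ * A * U) i 0 = μ 0 * (1 : Matrix (Fin (m+1)) (Fin (m+1)) ℂ) i 0 := by
      intro i
      have e1 : (Uᴴ * A * U) i 0 = ((Uᴴ * A) *ᵥ (fun a => U a 0)) i := hcolgen _ _ _ _
      have e2 : (fun a => U a 0) = (e0 : Fin (m+1) → ℂ) := funext hU0
      rw [e1, e2, ← Matrix.mulVec_mulVec, heig0, Matrix.mulVec_smul]
      have e3 : (Uᴴ *ᵥ (e0 : Fin (m+1) → ℂ)) i = (Uᴴ * U) i 0 := by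
        rw [hcolgen Uᴴ U 0 i, e2]
      rw [Pi.smul_apply, e3, hU, smul_eq_mul]
    -- the compressed matrix
    set A' : Matrix (Fin m) (Fin m) ℂ := (Uᴴ * A * U).submatrix Fin.succ Fin.succ with hA'def
    have hchm : (charmatrix (Uᴴ * A * U)).submatrix Fin.succ Fin.succ = charmatrix A' := by
      ext i j
      rcases eq_or_ne i j with rfl | hij
      · simp [Matrix.charmatrix_apply_eq, hA'def]
      · have : (Fin.succ i) ≠ (Fin.succ j) := fun hc => hij (Fin.succ_injective _ hc)
        simp [Matrix.charmatrix_apply_ne _ _ _ hij, Matrix.charmatrix_apply_ne _ _ _ this,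
          hA'def]
    have hblock : (Uᴴ * A * U).charpoly = (X - C (μ 0)) * A'.charpoly := by
      rw [Matrix.charpoly, det_succ_col_zero_block (charmatrix (Uᴴ * A * U)) ?h0]
      · rw [hchm]
        congr 1
        rw [Matrix.charmatrix_apply_eq, hA1col 0, Matrix.one_apply_eq, mul_one]
      · intro i
        rw [Matrix.charmatrix_apply_ne _ _ _ (Fin.succ_ne_zero i), hA1col i.succ,
          Matrix.one_apply_ne (Fin.succ_ne_zero i), mul_zero, map_zero, neg_zero]
    have hA'cp : A'.charpoly = ∏ i : Fin m, (X - C (μ i.succ)) := by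
      have h1 : (Uᴴ * A * U).charpoly = A.charpoly := charpoly_unitary_conj U A hU
      have h2 : A.charpoly = (X - C (μ 0)) * ∏ i : Fin m, (X - C (μ i.succ)) := by
        rw [h, Fin.prod_univ_succ]
      apply mul_left_cancel₀ (X_sub_C_ne_zero (μ 0))
      rw [← hblock, h1, h2]
    have hk' : k ≤ m := Nat.succ_le_succ_iff.mp hk
    obtain ⟨V', hV'1, hV'2⟩ := ih hk' A' (fun i => μ i.succ) hA'cp
    -- extend V' to an isometry
    set W : Matrix (Fin (m+1)) (Fin (k+1)) ℂ := Matrix.of (fun a t =>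
      Fin.cases (Fin.cases (1:ℂ) (fun _ => 0) t) (fun a' => Fin.cases 0 (fun t' => V' a' t') t) a)
      with hWdef
    have W00 : W 0 0 = 1 := by simp [hWdef]
    have W0s : ∀ t : Fin k, W 0 t.succ = 0 := by intro t; simp [hWdef]
    have Ws0 : ∀ a : Fin m, W a.succ 0 = 0 := by intro a; simp [hWdef]
    have Wss : ∀ (a : Fin m) (t : Fin k), W a.succ t.succ = V' a t := by
      intro a t; simp [hWdef]
    have hWW : Wᴴ * W = 1 := by
      ext i j
      rw [Matrix.mul_apply, Fin.sum_univ_succ]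
      simp only [Matrix.conjTranspose_apply]
      refine Fin.cases ?_ (fun i' => ?_) i <;> refine Fin.cases ?_ (fun j' => ?_) j
      · rw [W00, Matrix.one_apply_eq]
        simp [Ws0]
      · rw [Matrix.one_apply_ne (Ne.symm (Fin.succ_ne_zero j')), W0s]
        simp [Ws0]
      · rw [Matrix.one_apply_ne (Fin.succ_ne_zero i'), W0s]
        simp [Ws0]
      · rw [W0s, W0s]
        have hsum : ∑ a : Fin m, star (W a.succ i'.succ) * W a.succ j'.succ
            = (V'ᴴ * V') i' j' := by
          rw [Matrix.mul_apply]
          exact Finset.sum_congr rfl fun a _ =>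
            by rw [Wss, Wss, Matrix.conjTranspose_apply]
        rw [star_zero, zero_mul, zero_add, hsum, hV'1]
        rcases eq_or_ne i' j' with rfl | hne
        · rw [Matrix.one_apply_eq, Matrix.one_apply_eq]
        · rw [Matrix.one_apply_ne hne,
            Matrix.one_apply_ne (fun hc => hne (Fin.succ_injective _ hc))]
    refine ⟨U * W, ?_, ?_⟩
    · rw [Matrix.conjTranspose_mul, Matrix.mul_assoc Wᴴ Uᴴ (U*W), ← Matrix.mul_assoc Uᴴ U W,
        hU, Matrix.one_mul, hWW]
    · have hassoc : (U*W)ᴴ * A * (U*W) = Wᴴ * (Uᴴ * A * U) * W := by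
        rw [Matrix.conjTranspose_mul]
        simp only [Matrix.mul_assoc]
      rw [hassoc]
      set M' : Matrix (Fin (k+1)) (Fin (k+1)) ℂ := Wᴴ * (Uᴴ * A * U) * W with hM'
      have hAW : ∀ a, ((Uᴴ * A * U) * W) a 0
          = μ 0 * (1 : Matrix (Fin (m+1)) (Fin (m+1)) ℂ) a 0 := by
        intro a
        rw [Matrix.mul_apply, Fin.sum_univ_succ, W00, mul_one,
          Finset.sum_eq_zero (fun b (_ : b ∈ Finset.univ) => by rw [Ws0, mul_zero]), add_zero]
        exact hA1col a
      have hM'col : ∀ i, M' i 0 = μ 0 * star (W 0 i) := by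
        intro i
        rw [hM', Matrix.mul_assoc, Matrix.mul_apply, Fin.sum_univ_succ,
          Matrix.conjTranspose_apply, hAW 0, Matrix.one_apply_eq, mul_one,
          Finset.sum_eq_zero (fun a (_ : a ∈ Finset.univ) => by
            rw [hAW, Matrix.one_apply_ne (Fin.succ_ne_zero a), mul_zero, mul_zero]), add_zero]
        ring
      have hM'00 : M' 0 0 = μ 0 := by rw [hM'col 0, W00]; simp
      have hM's0 : ∀ i : Fin k, M' i.succ 0 = 0 := by
        intro i; rw [hM'col, W0s]; simp
      have inner : ∀ (a : Fin m) (j : Fin k),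
          ((Uᴴ * A * U) * W) a.succ j.succ = (A' * V') a j := by
        intro a j
        rw [Matrix.mul_apply, Fin.sum_univ_succ, W0s, mul_zero, zero_add, Matrix.mul_apply]
        refine Finset.sum_congr rfl fun b _ => ?_
        rw [Wss, hA'def, Matrix.submatrix_apply]
      have hsub : M'.submatrix Fin.succ Fin.succ = V'ᴴ * (A' * V') := by
        ext i j
        rw [Matrix.submatrix_apply, hM', Matrix.mul_assoc, Matrix.mul_apply, Fin.sum_univ_succ,
          Matrix.conjTranspose_apply, W0s, star_zero, zero_mul, zero_add, Matrix.mul_apply]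
        refine Finset.sum_congr rfl fun a _ => ?_
        rw [Matrix.conjTranspose_apply, Wss, inner, Matrix.conjTranspose_apply]
      rw [det_succ_col_zero_block M' hM's0, hM'00, hsub, ← Matrix.mul_assoc, hV'2,
        Fin.prod_univ_succ]
      congr 1

theorem cauchyBinet {n k : ℕ} (X Y : Matrix (Fin n) (Fin k) ℂ) :
    Matrix.det (Xᴴ * Y) = ∑ s ∈ (Finset.powersetCard k (Finset.univ : Finset (Fin n))).attach,
      (starRingEnd ℂ) (Matrix.det (X.submatrix (s.1.orderEmbOfFin
          (Finset.mem_powersetCard.mp s.2).2) id)) *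
        Matrix.det (Y.submatrix (s.1.orderEmbOfFin (Finset.mem_powersetCard.mp s.2).2) id) := by
  classical
  have stepA : Matrix.det (Xᴴ * Y)
      = ∑ p : Fin k → Fin n, (∏ i, (starRingEnd ℂ) (X (p i) i))
          * Matrix.det (Y.submatrix p id) := by
    have h1 : Xᴴ * Y = fun i => ∑ a : Fin n, (starRingEnd ℂ) (X a i) • (fun j => Y a j) := by
      funext i j
      rw [Matrix.mul_apply]
      simp [Matrix.conjTranspose_apply]
    show Matrix.detRowAlternating (Xᴴ * Y) = _
    rw [h1, ← AlternatingMap.coe_multilinearMap, MultilinearMap.map_sum]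
    refine Finset.sum_congr rfl fun p _ => ?_
    have := MultilinearMap.map_smul_univ (Matrix.detRowAlternating :
      (Fin k → ℂ) [⋀^Fin k]→ₗ[ℂ] ℂ).toMultilinearMap
      (fun i => (starRingEnd ℂ) (X (p i) i)) (fun i => fun j => Y (p i) j)
    rw [AlternatingMap.coe_multilinearMap] at this
    exact this.trans (by rw [smul_eq_mul]; rfl)
  -- split off non-injective maps
  rw [stepA, ← Finset.sum_filter_add_sum_filter_not Finset.univ
    (fun p : Fin k → Fin n => Function.Injective p)]
  have hnoninj : ∑ p ∈ Finset.univ.filter (fun p : Fin k → Fin n => ¬ Function.Injective p),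
      (∏ i, (starRingEnd ℂ) (X (p i) i)) * Matrix.det (Y.submatrix p id) = 0 := by
    refine Finset.sum_eq_zero fun p hp => ?_
    rw [Finset.mem_filter] at hp
    obtain ⟨a, b, hab, hne⟩ := Function.not_injective_iff.mp hp.2
    have hz : Matrix.det (Y.submatrix p id) = 0 := by
      refine Matrix.det_zero_of_row_eq hne ?_
      funext j
      show Y (p a) j = Y (p b) j
      rw [hab]
    rw [hz, mul_zero]
  rw [hnoninj, add_zero]
  -- image lemma
  have himg : ∀ (s : Finset (Fin n)) (hs : s.card = k) (σ : Equiv.Perm (Fin k)),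
      Finset.image (fun i => s.orderEmbOfFin hs (σ i)) Finset.univ = s := by
    intro s hs σ
    apply Finset.eq_of_subset_of_card_le
    · intro a ha
      obtain ⟨i, _, rfl⟩ := Finset.mem_image.mp ha
      exact Finset.orderEmbOfFin_mem s hs (σ i)
    · have : Function.Injective (fun i => s.orderEmbOfFin hs (σ i)) :=
        fun i j hij => σ.injective ((s.orderEmbOfFin hs).injective hij)
      rw [Finset.card_image_of_injective _ this, Finset.card_univ, Fintype.card_fin, hs]
  -- bijection between sigma type and injective maps
  have hbij : ∑ x ∈ ((Finset.powersetCard k (Finset.univ : Finset (Fin n))).attach.sigma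
        (fun _ => (Finset.univ : Finset (Equiv.Perm (Fin k))))),
      ((∏ i, (starRingEnd ℂ) (X ((x.1).1.orderEmbOfFin
          (Finset.mem_powersetCard.mp (x.1).2).2 (x.2 i)) i))
        * Matrix.det (Y.submatrix (fun i => (x.1).1.orderEmbOfFin
          (Finset.mem_powersetCard.mp (x.1).2).2 (x.2 i)) id))
      = ∑ p ∈ Finset.univ.filter (fun p : Fin k → Fin n => Function.Injective p),
        (∏ i, (starRingEnd ℂ) (X (p i) i)) * Matrix.det (Y.submatrix p id) := by
    refine Finset.sum_bij (fun x _ => fun i => (x.1).1.orderEmbOfFin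
      (Finset.mem_powersetCard.mp (x.1).2).2 (x.2 i)) ?_ ?_ ?_ ?_
    · intro x _
      rw [Finset.mem_filter]
      exact ⟨Finset.mem_univ _,
        fun i j hij => (x.2).injective (((x.1).1.orderEmbOfFin _).injective hij)⟩
    · rintro ⟨⟨s1, hm1⟩, σ1⟩ h1 ⟨⟨s2, hm2⟩, σ2⟩ h2 heq
      have hs1 : s1.card = k := (Finset.mem_powersetCard.mp hm1).2
      have hs2 : s2.card = k := (Finset.mem_powersetCard.mp hm2).2
      have h12 : s1 = s2 := by
        rw [← himg s1 hs1 σ1, ← himg s2 hs2 σ2]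
        exact Finset.image_congr (fun i _ => congrFun heq i)
      subst h12
      have hσ : σ1 = σ2 := by
        ext i
        have h5 := congrFun heq i
        have h6 : s1.orderEmbOfFin hs1 (σ1 i) = s1.orderEmbOfFin hs1 (σ2 i) := h5
        exact congrArg Fin.val ((s1.orderEmbOfFin hs1).injective h6)
      subst hσ
      rfl
    · intro p hp
      rw [Finset.mem_filter] at hp
      have hinj := hp.2
      have hcard : (Finset.image p Finset.univ).card = k := by
        rw [Finset.card_image_of_injective _ hinj, Finset.card_univ, Fintype.card_fin]
      have hmem : Finset.image p Finset.univ ∈ Finset.powersetCard k (Finset.univ : Finset (Fin n)) :=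
        Finset.mem_powersetCard.mpr ⟨Finset.subset_univ _, hcard⟩
      have hmem2 : ∀ i, p i ∈ Finset.image p Finset.univ :=
        fun i => Finset.mem_image_of_mem p (Finset.mem_univ i)
      set τ : Fin k → Fin k :=
        fun i => ((Finset.image p Finset.univ).orderIsoOfFin hcard).symm ⟨p i, hmem2 i⟩ with hτ
      have hτinj : Function.Injective τ := by
        intro a b hab
        apply hinj
        have h3 := congrArg ((Finset.image p Finset.univ).orderIsoOfFin hcard) hab
        rw [OrderIso.apply_symm_apply, OrderIso.apply_symm_apply] at h3
        exact congrArg Subtype.val h3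
      refine ⟨⟨⟨Finset.image p Finset.univ, hmem⟩,
        Equiv.ofBijective τ (Finite.injective_iff_bijective.mp hτinj)⟩,
        Finset.mem_sigma.mpr ⟨Finset.mem_attach _ _, Finset.mem_univ _⟩, ?_⟩
      funext i
      show (Finset.image p Finset.univ).orderEmbOfFin hcard (τ i) = p i
      rw [hτ, ← Finset.coe_orderIsoOfFin_apply, OrderIso.apply_symm_apply]
    · intro x _
      rfl
  rw [← hbij, Finset.sum_sigma]
  refine Finset.sum_congr rfl fun s _ => ?_
  -- per-subset permutation sum
  set e := (s.1.orderEmbOfFin (Finset.mem_powersetCard.mp s.2).2) with he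
  have hsmul : ∀ (u : ℤˣ) (x : ℂ), u • x = ((u : ℤ) : ℂ) * x := by
    intro u x
    rw [Units.smul_def, zsmul_eq_mul]
  have hdetperm : ∀ σ : Equiv.Perm (Fin k),
      Matrix.det (Y.submatrix (fun i => e (σ i)) id)
      = ((Equiv.Perm.sign σ : ℤ) : ℂ) * Matrix.det (Y.submatrix (⇑e) id) := by
    intro σ
    have h4 : Y.submatrix (fun i => e (σ i)) id
        = (Y.submatrix (⇑e) id).submatrix (⇑σ) id := rfl
    rw [h4]
    exact Matrix.det_permute σ _
  have hXdet : ∑ σ : Equiv.Perm (Fin k),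
      ((Equiv.Perm.sign σ : ℤ) : ℂ) * ∏ i, (starRingEnd ℂ) (X (e (σ i)) i)
      = (starRingEnd ℂ) (Matrix.det (X.submatrix (⇑e) id)) := by
    rw [RingHom.map_det, Matrix.det_apply]
    refine Finset.sum_congr rfl fun σ _ => ?_
    rw [hsmul]
    rfl
  calc ∑ σ : Equiv.Perm (Fin k),
      (∏ i, (starRingEnd ℂ) (X (e (σ i)) i)) * Matrix.det (Y.submatrix (fun i => e (σ i)) id)
      = ∑ σ : Equiv.Perm (Fin k), (((Equiv.Perm.sign σ : ℤ) : ℂ)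
            * ∏ i, (starRingEnd ℂ) (X (e (σ i)) i))
          * Matrix.det (Y.submatrix (⇑e) id) := by
        refine Finset.sum_congr rfl fun σ _ => ?_
        rw [hdetperm σ]
        ring
    _ = (starRingEnd ℂ) (Matrix.det (X.submatrix (⇑e) id))
          * Matrix.det (Y.submatrix (⇑e) id) := by
        rw [← Finset.sum_mul, hXdet]

end

end MajAux

open MajAux Matrix
open scoped ComplexOrder

theorem majorization_zeros_vs_absolute_polynomial
    (n : ℕ) (hn : 2 ≤ n) (z : ℕ → ℂ) (γ : ℕ → ℝ)
    (hγ0 : ∀ k ∈ Finset.range n, 0 ≤ γ k)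
    (hγ1 : ∑ k ∈ Finset.range n, γ k = 1)
    (w : ℕ → ℂ) (v : ℕ → ℝ)
    (hwdesc : ∀ i j, i ≤ j → j < n - 1 → ‖w j‖ ≤ ‖w i‖)
    (hwroots : (∑ k ∈ Finset.range n, C ((γ k : ℂ)) *
        ∏ j ∈ (Finset.range n).erase k, (X - C (z j)))
        = ∏ j ∈ Finset.range (n - 1), (X - C (w j)))
    (hv0 : ∀ j ∈ Finset.range (n - 1), 0 ≤ v j)
    (hvdesc : ∀ i j, i ≤ j → j < n - 1 → v j ≤ v i)
    (hvroots : (∑ k ∈ Finset.range n, C ((γ k : ℂ)) *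
        ∏ j ∈ (Finset.range n).erase k, (X - C ((‖z j‖ : ℂ))))
        = ∏ j ∈ Finset.range (n - 1), (X - C ((v j : ℂ)))) :
    ∀ k, 1 ≤ k → k ≤ n - 1 →
      ∏ j ∈ Finset.range k, ‖w j‖ ≤ ∏ j ∈ Finset.range k, v j := by
  obtain ⟨m, rfl⟩ : ∃ m, n = m + 1 := ⟨n - 1, by omega⟩
  simp only [Nat.add_sub_cancel] at hwdesc hwroots hv0 hvdesc hvroots
  intro k hk1 hkm
  simp only [Nat.add_sub_cancel] at hkm
  -- the weight vector
  set u : Fin (m+1) → ℂ := fun j => ((Real.sqrt (γ (j : ℕ)) : ℝ) : ℂ) with hudef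
  have hu2 : ∀ j : Fin (m+1), u j * u j = ((γ (j : ℕ) : ℝ) : ℂ) := by
    intro j
    rw [hudef, ← Complex.ofReal_mul, Real.mul_self_sqrt (hγ0 (j : ℕ) (by
      simpa using j.isLt))]
  have husum : ∑ j : Fin (m+1), u j * u j = 1 := by
    rw [Finset.sum_congr rfl (fun j _ => hu2 j), ← Complex.ofReal_sum]
    rw [Fin.sum_univ_eq_sum_range (fun j => γ j) (m+1), hγ1, Complex.ofReal_one]
  -- translations of the two polynomial hypotheses
  have hwpoly : ((1 - Matrix.vecMulVec u u) * Matrix.diagonal (fun j : Fin (m+1) => z (j : ℕ))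
        * (1 - Matrix.vecMulVec u u)).charpoly
      = X * ∏ j : Fin m, (X - C (w (j : ℕ))) := by
    rw [charpoly_proj_diag_proj u husum]
    congr 1
    calc ∑ kk : Fin (m+1), C (u kk * u kk) * ∏ j ∈ Finset.univ.erase kk, (X - C (z (j : ℕ)))
        = ∑ kk ∈ Finset.range (m+1), C ((γ kk : ℂ))
            * ∏ j ∈ (Finset.range (m+1)).erase kk, (X - C (z j)) := by
          rw [← Fin.sum_univ_eq_sum_range (fun kk => C ((γ kk : ℂ))
            * ∏ j ∈ (Finset.range (m+1)).erase kk, (X - C (z j))) (m+1)]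
          refine Finset.sum_congr rfl fun kk _ => ?_
          rw [hu2 kk, prod_erase_fin]
      _ = ∏ j ∈ Finset.range m, (X - C (w j)) := hwroots
      _ = ∏ j : Fin m, (X - C (w (j : ℕ))) :=
          (Fin.prod_univ_eq_prod_range (fun j => (X - C (w j))) m).symm
  have hvpoly : ((1 - Matrix.vecMulVec u u)
        * Matrix.diagonal (fun j : Fin (m+1) => ((‖z (j : ℕ)‖ : ℝ) : ℂ))
        * (1 - Matrix.vecMulVec u u)).charpoly
      = X * ∏ j : Fin m, (X - C ((v (j : ℕ) : ℂ))) := by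
    rw [charpoly_proj_diag_proj u husum]
    congr 1
    calc ∑ kk : Fin (m+1), C (u kk * u kk)
          * ∏ j ∈ Finset.univ.erase kk, (X - C ((‖z (j : ℕ)‖ : ℂ)))
        = ∑ kk ∈ Finset.range (m+1), C ((γ kk : ℂ))
            * ∏ j ∈ (Finset.range (m+1)).erase kk, (X - C ((‖z j‖ : ℂ))) := by
          rw [← Fin.sum_univ_eq_sum_range (fun kk => C ((γ kk : ℂ))
            * ∏ j ∈ (Finset.range (m+1)).erase kk, (X - C ((‖z j‖ : ℂ)))) (m+1)]
          refine Finset.sum_congr rfl fun kk _ => ?_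
          rw [hu2 kk, prod_erase_fin (fun j => ((‖z j‖ : ℂ)))]
      _ = ∏ j ∈ Finset.range m, (X - C ((v j : ℂ))) := hvroots
      _ = ∏ j : Fin m, (X - C ((v (j : ℕ) : ℂ))) :=
          (Fin.prod_univ_eq_prod_range (fun j => (X - C ((v j : ℂ)))) m).symm
  -- phases and square roots
  set pf : Fin (m+1) → ℂ := fun j => if z (j : ℕ) = 0 then 1
    else z (j : ℕ) / ((‖z (j : ℕ)‖ : ℝ) : ℂ) with hpfdef
  set sf : Fin (m+1) → ℂ := fun j => ((Real.sqrt (‖z (j : ℕ)‖) : ℝ) : ℂ) with hsfdef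
  have hsf2 : ∀ j, sf j * sf j = ((‖z (j : ℕ)‖ : ℝ) : ℂ) := by
    intro j
    rw [hsfdef, ← Complex.ofReal_mul, Real.mul_self_sqrt (norm_nonneg _)]
  have hpf : ∀ j, pf j * (sf j * sf j) = z (j : ℕ) := by
    intro j
    rw [hsf2 j]
    simp only [hpfdef]
    rcases eq_or_ne (z (j : ℕ)) 0 with hz | hz
    · simp [hz]
    · rw [if_neg hz, div_mul_cancel₀]
      simpa [Complex.ofReal_eq_zero] using (norm_ne_zero_iff.mpr hz)
  have hpfu : ∀ j, (starRingEnd ℂ) (pf j) * pf j = 1 := by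
    intro j
    simp only [hpfdef]
    rcases eq_or_ne (z (j : ℕ)) 0 with hz | hz
    · simp [hz]
    · rw [if_neg hz, map_div₀, Complex.conj_ofReal]
      have habs : ((‖z (j:ℕ)‖ : ℝ) : ℂ) ≠ 0 := by
        simpa [Complex.ofReal_eq_zero] using (norm_ne_zero_iff.mpr hz)
      field_simp
      rw [mul_comm ((starRingEnd ℂ) (z (j:ℕ))) (z (j:ℕ)), Complex.mul_conj]
      rw [Complex.normSq_eq_norm_sq]
      push_cast
      ring
  -- matrices
  set P : Matrix (Fin (m+1)) (Fin (m+1)) ℂ := 1 - Matrix.vecMulVec u u with hPdef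
  set Sm : Matrix (Fin (m+1)) (Fin (m+1)) ℂ := Matrix.diagonal sf with hSmdef
  set Up : Matrix (Fin (m+1)) (Fin (m+1)) ℂ := Matrix.diagonal pf with hUpdef
  have hPh : Pᴴ = P := by
    rw [hPdef]
    ext i j
    rw [Matrix.conjTranspose_apply, Matrix.sub_apply, Matrix.sub_apply, star_sub,
      Matrix.vecMulVec_apply, Matrix.vecMulVec_apply]
    congr 1
    · rcases eq_or_ne i j with rfl | hij
      · simp
      · rw [Matrix.one_apply_ne hij, Matrix.one_apply_ne (Ne.symm hij), star_zero]
    · simp only [hudef, star_mul', Complex.star_def]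
      rw [Complex.conj_ofReal, Complex.conj_ofReal, mul_comm]
  have hSh : Smᴴ = Sm := by
    rw [hSmdef, Matrix.diagonal_conjTranspose]
    have hstar : star sf = sf := funext fun j => by
      simp only [hsfdef, Pi.star_apply, Complex.star_def]
      exact Complex.conj_ofReal _
    rw [hstar]
  have hUpu : Upᴴ * Up = 1 := by
    rw [hUpdef, Matrix.diagonal_conjTranspose, Matrix.diagonal_mul_diagonal]
    have hone : (fun j => star pf j * pf j) = fun _ : Fin (m+1) => (1 : ℂ) :=
      funext fun j => by simpa only [Pi.star_apply, RCLike.star_def] using hpfu j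
    rw [hone, Matrix.diagonal_one]
  have hZdecomp : Matrix.diagonal (fun j : Fin (m+1) => z (j : ℕ)) = Sm * Up * Sm := by
    rw [hSmdef, hUpdef, Matrix.diagonal_mul_diagonal, Matrix.diagonal_mul_diagonal]
    refine congrArg Matrix.diagonal (funext fun j => ?_)
    rw [← hpf j]
    ring
  have hBdecomp : Matrix.diagonal (fun j : Fin (m+1) => ((‖z (j : ℕ)‖ : ℝ) : ℂ))
      = Sm * Sm := by
    rw [hSmdef, Matrix.diagonal_mul_diagonal]
    exact congrArg Matrix.diagonal (funext fun j => (hsf2 j).symm)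
  set Nm : Matrix (Fin (m+1)) (Fin (m+1)) ℂ :=
    P * Matrix.diagonal (fun j : Fin (m+1) => z (j : ℕ)) * P with hNmdef
  set Bm : Matrix (Fin (m+1)) (Fin (m+1)) ℂ :=
    P * Matrix.diagonal (fun j : Fin (m+1) => ((‖z (j : ℕ)‖ : ℝ) : ℂ)) * P with hBmdef
  -- Schur step for Nm
  set μw : Fin (m+1) → ℂ := fun i => if (i : ℕ) < m then w (i : ℕ) else 0 with hμwdef
  have hμprod : ∏ i : Fin (m+1), (X - C (μw i)) = X * ∏ j : Fin m, (X - C (w (j : ℕ))) := by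
    rw [Fin.prod_univ_castSucc]
    have h1 : ∀ i : Fin m, μw i.castSucc = w (i : ℕ) := by
      intro i
      simp only [hμwdef]
      simp [i.isLt]
    have h2 : μw (Fin.last m) = 0 := by simp only [hμwdef]; simp
    rw [h2, map_zero, sub_zero, Finset.prod_congr rfl (fun i _ => by rw [h1 i])]
    ring
  have hcpN : Nm.charpoly = ∏ i, (X - C (μw i)) := by
    rw [hμprod, hNmdef, hPdef, hwpoly]
  obtain ⟨V, hV1, hV2⟩ := exists_isometry_det k (le_trans hkm (Nat.le_succ m)) Nm μw hcpN
  have hdetV : Matrix.det (Vᴴ * Nm * V) = ∏ j : Fin k, w ((j : ℕ)) := by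
    rw [hV2]
    refine Finset.prod_congr rfl fun i _ => ?_
    simp only [hμwdef]
    have hlt : (i : ℕ) < m := lt_of_lt_of_le i.isLt hkm
    simp [hlt]
  -- compressed factors
  set A1 : Matrix (Fin (m+1)) (Fin k) ℂ := Sm * P * V with hA1def
  set Y1 : Matrix (Fin (m+1)) (Fin k) ℂ := Up * A1 with hY1def
  have hVNV : Vᴴ * Nm * V = A1ᴴ * Y1 := by
    rw [hY1def, hA1def, Matrix.conjTranspose_mul, Matrix.conjTranspose_mul, hPh, hSh, hNmdef,
      hZdecomp]
    simp only [Matrix.mul_assoc]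
  have hVBV : Vᴴ * Bm * V = A1ᴴ * A1 := by
    rw [hA1def, Matrix.conjTranspose_mul, Matrix.conjTranspose_mul, hPh, hSh, hBmdef, hBdecomp]
    simp only [Matrix.mul_assoc]
  have hYY : Y1ᴴ * Y1 = A1ᴴ * A1 := by
    rw [hY1def, Matrix.conjTranspose_mul, Matrix.mul_assoc, ← Matrix.mul_assoc Upᴴ Up A1,
      hUpu, Matrix.one_mul]
  have cb1 := cauchyBinet A1 Y1
  have cb2 := cauchyBinet A1 A1
  have cb3 := cauchyBinet Y1 Y1
  set Sk := (Finset.powersetCard k (Finset.univ : Finset (Fin (m+1)))).attach with hSkdef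
  set RA : ℝ := ∑ s ∈ Sk, Complex.normSq (Matrix.det (A1.submatrix
    (s.1.orderEmbOfFin (Finset.mem_powersetCard.mp s.2).2) id)) with hRAdef
  set RY : ℝ := ∑ s ∈ Sk, Complex.normSq (Matrix.det (Y1.submatrix
    (s.1.orderEmbOfFin (Finset.mem_powersetCard.mp s.2).2) id)) with hRYdef
  have h2 : Matrix.det (A1ᴴ * A1) = (RA : ℂ) := by
    rw [cb2, hRAdef]
    push_cast
    refine Finset.sum_congr rfl fun s _ => ?_
    rw [mul_comm, Complex.mul_conj]
  have h3 : Matrix.det (Y1ᴴ * Y1) = (RY : ℂ) := by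
    rw [cb3, hRYdef]
    push_cast
    refine Finset.sum_congr rfl fun s _ => ?_
    rw [mul_comm, Complex.mul_conj]
  have hRYA : RY = RA := by
    have h5 : (RY : ℂ) = (RA : ℂ) := by rw [← h3, ← h2, hYY]
    exact_mod_cast h5
  have hRAnn : 0 ≤ RA := by
    rw [hRAdef]
    exact Finset.sum_nonneg fun s _ => Complex.normSq_nonneg _
  have habs1 : ‖Matrix.det (Vᴴ * Nm * V)‖ ≤ RA := by
    rw [hVNV, cb1]
    have step1 : ‖∑ s ∈ Sk,
        (starRingEnd ℂ) (Matrix.det (A1.submatrix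
          (s.1.orderEmbOfFin (Finset.mem_powersetCard.mp s.2).2) id)) *
        Matrix.det (Y1.submatrix (s.1.orderEmbOfFin (Finset.mem_powersetCard.mp s.2).2) id)‖
        ≤ ∑ s ∈ Sk, ‖Matrix.det (A1.submatrix
          (s.1.orderEmbOfFin (Finset.mem_powersetCard.mp s.2).2) id)‖ *
        ‖Matrix.det (Y1.submatrix
          (s.1.orderEmbOfFin (Finset.mem_powersetCard.mp s.2).2) id)‖ := by
      refine le_trans (norm_sum_le _ _) (le_of_eq ?_)
      refine Finset.sum_congr rfl fun s _ => ?_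
      rw [norm_mul, Complex.norm_conj]
    refine le_trans step1 ?_
    have hcs := sum_mul_sq_le_sq_mul_sq Sk
      (fun s => ‖Matrix.det (A1.submatrix
        (s.1.orderEmbOfFin (Finset.mem_powersetCard.mp s.2).2) id)‖)
      (fun s => ‖Matrix.det (Y1.submatrix
        (s.1.orderEmbOfFin (Finset.mem_powersetCard.mp s.2).2) id)‖)
    have e1 : ∑ s ∈ Sk, ‖Matrix.det (A1.submatrix
        (s.1.orderEmbOfFin (Finset.mem_powersetCard.mp s.2).2) id)‖ ^ 2 = RA := by
      rw [hRAdef]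
      exact Finset.sum_congr rfl fun s _ => Complex.sq_norm _
    have e2 : ∑ s ∈ Sk, ‖Matrix.det (Y1.submatrix
        (s.1.orderEmbOfFin (Finset.mem_powersetCard.mp s.2).2) id)‖ ^ 2 = RA := by
      rw [← hRYA, hRYdef]
      exact Finset.sum_congr rfl fun s _ => Complex.sq_norm _
    rw [e1, e2] at hcs
    have habsnn : 0 ≤ ∑ s ∈ Sk, ‖Matrix.det (A1.submatrix
        (s.1.orderEmbOfFin (Finset.mem_powersetCard.mp s.2).2) id)‖ *
        ‖Matrix.det (Y1.submatrix
          (s.1.orderEmbOfFin (Finset.mem_powersetCard.mp s.2).2) id)‖ :=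
      Finset.sum_nonneg fun s _ => mul_nonneg (norm_nonneg _) (norm_nonneg _)
    nlinarith [hcs, habsnn, hRAnn]
  -- spectral analysis of Bm
  have hBfact : Bm = (Sm * P)ᴴ * (Sm * P) := by
    rw [Matrix.conjTranspose_mul, hPh, hSh, hBmdef, hBdecomp]
    simp only [Matrix.mul_assoc]
  have hBpsd : Bm.PosSemidef := by
    rw [hBfact]
    exact Matrix.posSemidef_conjTranspose_mul_self _
  have hBherm : Bm.IsHermitian := hBpsd.1
  set β : Fin (m+1) → ℝ := hBherm.eigenvalues with hβdef
  have hβnn : ∀ i, 0 ≤ β i := fun i => hBpsd.eigenvalues_nonneg i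
  set Wm : Matrix (Fin (m+1)) (Fin (m+1)) ℂ := (hBherm.eigenvectorUnitary :
    Matrix.unitaryGroup (Fin (m+1)) ℂ).1
    with hWmdef
  have hWu1 : Wmᴴ * Wm = 1 := by
    have h7 := Matrix.mem_unitaryGroup_iff'.mp hBherm.eigenvectorUnitary.2
    rwa [Matrix.star_eq_conjTranspose] at h7
  have hWu2 : Wm * Wmᴴ = 1 := mul_eq_one_comm.mp hWu1
  have hst : Bm = Wm * Matrix.diagonal (RCLike.ofReal ∘ β) * Wmᴴ := by
    rw [← Matrix.star_eq_conjTranspose]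
    exact hBherm.spectral_theorem
  have hcpB : Bm.charpoly = ∏ i, (X - C (RCLike.ofReal (β i))) := by
    calc Bm.charpoly = ((Wmᴴ)ᴴ * Matrix.diagonal (RCLike.ofReal ∘ β) * Wmᴴ).charpoly := by
          rw [Matrix.conjTranspose_conjTranspose, ← hst]
      _ = (Matrix.diagonal (RCLike.ofReal ∘ β)).charpoly := by
          refine charpoly_unitary_conj Wmᴴ _ ?_
          rw [Matrix.conjTranspose_conjTranspose]
          exact hWu2
      _ = ∏ i, (X - C (RCLike.ofReal (β i))) := MajAux.charpoly_diagonal _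
  -- identify the eigenvalues of Bm with v's and 0
  set μv : Fin (m+1) → ℂ := fun i => if (i : ℕ) < m then ((v (i : ℕ) : ℝ) : ℂ) else 0 with hμvdef
  have hμvprod : ∏ i : Fin (m+1), (X - C (μv i))
      = X * ∏ j : Fin m, (X - C ((v (j : ℕ) : ℂ))) := by
    rw [Fin.prod_univ_castSucc]
    have h1 : ∀ i : Fin m, μv i.castSucc = ((v (i : ℕ) : ℝ) : ℂ) := by
      intro i
      simp only [hμvdef]
      simp [i.isLt]
    have h2 : μv (Fin.last m) = 0 := by simp only [hμvdef]; simp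
    rw [h2, map_zero, sub_zero, Finset.prod_congr rfl (fun i _ => by rw [h1 i])]
    ring
  have hcpB2 : Bm.charpoly = ∏ i, (X - C (μv i)) := by
    rw [hμvprod, hBmdef, hPdef, hvpoly]
  have hprodeq : ∏ i : Fin (m+1), (X - C (RCLike.ofReal (β i)))
      = ∏ i : Fin (m+1), (X - C (μv i)) := by rw [← hcpB, hcpB2]
  have hmulti : Multiset.map (fun i : Fin (m+1) => (RCLike.ofReal (β i) : ℂ)) Finset.univ.val
      = Multiset.map μv Finset.univ.val := by
    have h4 : (Multiset.map (fun a : ℂ => X - C a)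
          (Multiset.map (fun i : Fin (m+1) => (RCLike.ofReal (β i) : ℂ)) Finset.univ.val)).prod
        = (Multiset.map (fun a : ℂ => X - C a)
          (Multiset.map μv Finset.univ.val)).prod := by
      rw [Multiset.map_map, Multiset.map_map]
      exact hprodeq
    have h5 := congrArg Polynomial.roots h4
    rwa [Polynomial.roots_multiset_prod_X_sub_C, Polynomial.roots_multiset_prod_X_sub_C] at h5
  set β' : Fin (m+1) → ℝ := fun i => if (i : ℕ) < m then v (i : ℕ) else 0 with hβ'def
  have hmultiR : Multiset.map β Finset.univ.val = Multiset.map β' Finset.univ.val := by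
    apply Multiset.map_injective (Complex.ofReal_injective)
    rw [Multiset.map_map, Multiset.map_map]
    have e3 : (Complex.ofReal ∘ β) = fun i : Fin (m+1) => (RCLike.ofReal (β i) : ℂ) := rfl
    have e4 : (Complex.ofReal ∘ β') = μv := by
      funext i
      simp only [hβ'def, hμvdef, Function.comp_apply]
      split_ifs <;> simp
    rw [e3, e4]
    exact hmulti
  obtain ⟨σp, hσp⟩ := exists_perm_comp β β' hmultiR
  have hβ'desc : ∀ i j : Fin (m+1), i ≤ j → β' j ≤ β' i := by
    intro i j hij
    have hijn : (i : ℕ) ≤ (j : ℕ) := hij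
    simp only [hβ'def]
    rcases lt_or_ge (j : ℕ) m with hj | hj
    · rw [if_pos hj, if_pos (lt_of_le_of_lt hijn hj)]
      exact hvdesc (i : ℕ) (j : ℕ) hijn hj
    · rw [if_neg (not_lt.mpr hj)]
      split_ifs with hi
      · exact hv0 _ (Finset.mem_range.mpr hi)
      · exact le_refl 0
  have hβ'nn : ∀ i, 0 ≤ β' i := by
    intro i
    simp only [hβ'def]
    split_ifs with hi
    · exact hv0 _ (Finset.mem_range.mpr hi)
    · exact le_refl 0
  have hco : ∀ r : ℝ, (RCLike.ofReal r : ℂ) = ((r : ℝ) : ℂ) := fun r => rfl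
  -- compression in the eigenbasis of Bm
  set T : Matrix (Fin (m+1)) (Fin k) ℂ := Wmᴴ * V with hTdef
  have hTT : Tᴴ * T = 1 := by
    rw [hTdef, Matrix.conjTranspose_mul, Matrix.conjTranspose_conjTranspose, Matrix.mul_assoc,
      ← Matrix.mul_assoc Wm Wmᴴ V, hWu2, Matrix.one_mul, hV1]
  have hVBV2 : Vᴴ * Bm * V = Tᴴ * ((Matrix.diagonal (RCLike.ofReal ∘ β) : Matrix (Fin (m+1)) (Fin (m+1)) ℂ) * T) := by
    rw [hTdef, Matrix.conjTranspose_mul, Matrix.conjTranspose_conjTranspose, hst]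
    simp only [Matrix.mul_assoc]
  have cb4 := cauchyBinet T ((Matrix.diagonal (RCLike.ofReal ∘ β) : Matrix (Fin (m+1)) (Fin (m+1)) ℂ) * T)
  have cb5 := cauchyBinet T T
  have hdiagsub : ∀ s : {x // x ∈ Finset.powersetCard k (Finset.univ : Finset (Fin (m+1)))},
      Matrix.det (((Matrix.diagonal (RCLike.ofReal ∘ β) : Matrix (Fin (m+1)) (Fin (m+1)) ℂ) * T).submatrix
        (s.1.orderEmbOfFin (Finset.mem_powersetCard.mp s.2).2) id)
      = (∏ i : Fin k, ((β (s.1.orderEmbOfFin (Finset.mem_powersetCard.mp s.2).2 i) : ℝ) : ℂ))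
        * Matrix.det (T.submatrix (s.1.orderEmbOfFin (Finset.mem_powersetCard.mp s.2).2) id) := by
    intro s
    have e5 : ((Matrix.diagonal (RCLike.ofReal ∘ β) : Matrix (Fin (m+1)) (Fin (m+1)) ℂ) * T).submatrix
        (s.1.orderEmbOfFin (Finset.mem_powersetCard.mp s.2).2) id
        = Matrix.diagonal (fun i : Fin k => ((β (s.1.orderEmbOfFin
            (Finset.mem_powersetCard.mp s.2).2 i) : ℝ) : ℂ))
          * T.submatrix (s.1.orderEmbOfFin (Finset.mem_powersetCard.mp s.2).2) id := by
      ext i j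
      rw [Matrix.submatrix_apply, Matrix.diagonal_mul, Matrix.diagonal_mul,
        Matrix.submatrix_apply]
      rfl
    rw [e5, Matrix.det_mul, Matrix.det_diagonal]
  have hRA2 : (RA : ℂ) = ∑ s ∈ Sk,
      (∏ i : Fin k, ((β (s.1.orderEmbOfFin (Finset.mem_powersetCard.mp s.2).2 i) : ℝ) : ℂ))
      * ((Complex.normSq (Matrix.det (T.submatrix (s.1.orderEmbOfFin
        (Finset.mem_powersetCard.mp s.2).2) id)) : ℝ) : ℂ) := by
    rw [← h2, ← hVBV, hVBV2, cb4]
    refine Finset.sum_congr rfl fun s _ => ?_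
    rw [hdiagsub s, mul_comm ((starRingEnd ℂ) _) _, mul_assoc]
    congr 1
    rw [Complex.mul_conj]
  have hsumT : ∑ s ∈ Sk, Complex.normSq (Matrix.det (T.submatrix (s.1.orderEmbOfFin
      (Finset.mem_powersetCard.mp s.2).2) id)) = 1 := by
    have h8 : Matrix.det (Tᴴ * T) = (1 : ℂ) := by rw [hTT, Matrix.det_one]
    rw [cb5] at h8
    have h9 : (((∑ s ∈ Sk, Complex.normSq (Matrix.det (T.submatrix (s.1.orderEmbOfFin
        (Finset.mem_powersetCard.mp s.2).2) id))) : ℝ) : ℂ) = 1 := by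
      push_cast
      rw [← h8]
      refine Finset.sum_congr rfl fun s _ => ?_
      rw [mul_comm, Complex.mul_conj]
    exact_mod_cast h9
  set Pk : ℝ := ∏ i : Fin k, v (i : ℕ) with hPkdef
  have hPk : ∀ s : {x // x ∈ Finset.powersetCard k (Finset.univ : Finset (Fin (m+1)))},
      ∏ i : Fin k, β (s.1.orderEmbOfFin (Finset.mem_powersetCard.mp s.2).2 i) ≤ Pk := by
    intro s
    have hg : Function.Injective (fun i : Fin k => σp (s.1.orderEmbOfFin
        (Finset.mem_powersetCard.mp s.2).2 i)) :=
      fun a b hab => (s.1.orderEmbOfFin (Finset.mem_powersetCard.mp s.2).2).injective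
        (σp.injective hab)
    have h10 := prod_le_prod_of_inj (le_trans hkm (Nat.le_succ m)) β' hβ'desc hβ'nn _ hg
    calc ∏ i : Fin k, β (s.1.orderEmbOfFin (Finset.mem_powersetCard.mp s.2).2 i)
        = ∏ i : Fin k, β' (σp (s.1.orderEmbOfFin (Finset.mem_powersetCard.mp s.2).2 i)) := by
          refine Finset.prod_congr rfl fun i _ => ?_
          rw [hσp]
          rfl
      _ ≤ ∏ i : Fin k, β' (Fin.castLE (le_trans hkm (Nat.le_succ m)) i) := h10
      _ = Pk := by
          rw [hPkdef]
          refine Finset.prod_congr rfl fun i _ => ?_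
          simp only [hβ'def]
          have hlt : ((Fin.castLE (le_trans hkm (Nat.le_succ m)) i : Fin (m+1)) : ℕ) < m :=
            lt_of_lt_of_le i.isLt hkm
          rw [if_pos hlt]
          rfl
  have hRA3 : RA ≤ Pk := by
    have h11 : RA = ∑ s ∈ Sk,
        (∏ i : Fin k, β (s.1.orderEmbOfFin (Finset.mem_powersetCard.mp s.2).2 i))
        * Complex.normSq (Matrix.det (T.submatrix (s.1.orderEmbOfFin
          (Finset.mem_powersetCard.mp s.2).2) id)) := by
      have h12 : ((∑ s ∈ Sk,
          (∏ i : Fin k, β (s.1.orderEmbOfFin (Finset.mem_powersetCard.mp s.2).2 i))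
          * Complex.normSq (Matrix.det (T.submatrix (s.1.orderEmbOfFin
            (Finset.mem_powersetCard.mp s.2).2) id)) : ℝ) : ℂ) = (RA : ℂ) := by
        rw [hRA2]
        push_cast
        rfl
      exact_mod_cast h12.symm
    rw [h11]
    calc ∑ s ∈ Sk,
        (∏ i : Fin k, β (s.1.orderEmbOfFin (Finset.mem_powersetCard.mp s.2).2 i))
        * Complex.normSq (Matrix.det (T.submatrix (s.1.orderEmbOfFin
          (Finset.mem_powersetCard.mp s.2).2) id))
        ≤ ∑ s ∈ Sk, Pk * Complex.normSq (Matrix.det (T.submatrix (s.1.orderEmbOfFin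
          (Finset.mem_powersetCard.mp s.2).2) id)) := by
          refine Finset.sum_le_sum fun s _ => ?_
          exact mul_le_mul_of_nonneg_right (hPk s) (Complex.normSq_nonneg _)
      _ = Pk := by rw [← Finset.mul_sum, hsumT, mul_one]
  calc ∏ j ∈ Finset.range k, ‖w j‖
      = ∏ j : Fin k, ‖w (j : ℕ)‖ :=
        (Fin.prod_univ_eq_prod_range (fun j => ‖w j‖) k).symm
    _ = ‖Matrix.det (Vᴴ * Nm * V)‖ := by
        rw [hdetV, norm_prod]
    _ ≤ RA := habs1
    _ ≤ Pk := hRA3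
    _ = ∏ j ∈ Finset.range k, v j := Fin.prod_univ_eq_prod_range (fun j => v j) k
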